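/- Let v be a unit vector in ℓ² and H ⊆ ℓ² a closed infinite-dimensional subspace with π_H(v) ≠ 0, where π_H is the orthogonal projection onto H. Then there exists ε > 0 such that for every unit vector v' with ‖v' − v‖ < ε, there exists a unit vector v'' with v'' − v ∈ H and ‖v'' − v‖ = ‖v' − v‖. -/

import Mathlib

open RealInnerProductSpace


/-- If `v` is a unit vector of `ℓ²` and `K` a closed infinite-dimensional subspace
with nonzero projection of `v` (i.e. `v ∉ Kᗮ`), then there is `ε > 0` such that any
unit vector `v'` with `‖v' − v‖ < ε` can be matched by a unit vector `v''` with
`v'' − v ∈ K` and `‖v'' − v‖ = ‖v' − v‖`. -/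
theorem unit_vector_perturbation {H : Type*} [NormedAddCommGroup H]
    [InnerProductSpace ℝ H] [CompleteSpace H] [TopologicalSpace.SeparableSpace H]
    (hinf : ¬FiniteDimensional ℝ H)
    (v : H) (hv : ‖v‖ = 1) (K : Submodule ℝ H) (hK : IsClosed (K : Set H))
    (hKinf : ¬FiniteDimensional ℝ K) (hproj : v ∉ Kᗮ) :
    ∃ ε > (0 : ℝ), ∀ v' : H, ‖v'‖ = 1 → ‖v' - v‖ < ε →
      ∃ v'' : H, ‖v''‖ = 1 ∧ v'' - v ∈ K ∧ ‖v'' - v‖ = ‖v' - v‖ := by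
  haveI : CompleteSpace K := hK.completeSpace_coe
  obtain ⟨p, hpK, hpne, hvp⟩ : ∃ p : H, p ∈ K ∧ p ≠ 0 ∧ v - p ∈ Kᗮ := by
    refine ⟨(K.orthogonalProjectionOnto v : H), (K.orthogonalProjectionOnto v).2, ?_,
      Submodule.sub_starProjection_mem_orthogonal (K := K) v⟩
    intro h
    exact hproj (Submodule.orthogonalProjectionOnto_eq_zero_iff.mp (Subtype.coe_injective h))
  have hinner_vp : ∀ x ∈ K, ⟪x, v - p⟫ = 0 := fun x hx =>
    (Submodule.mem_orthogonal K (v - p)).mp hvp x hx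
  -- find u ∈ K, u ≠ 0, ⟪u, p⟫ = 0
  obtain ⟨u, huK, hup, hune⟩ : ∃ u : H, u ∈ K ∧ ⟪u, p⟫ = 0 ∧ u ≠ 0 := by
    have hq : (⟨p, hpK⟩ : K) ≠ 0 := fun h => hpne (congrArg Subtype.val h)
    set S : Submodule ℝ K := ℝ ∙ (⟨p, hpK⟩ : K) with hS
    haveI : FiniteDimensional ℝ S := by infer_instance
    have hSne : Sᗮ ≠ ⊥ := by
      intro h
      have hS_top : S = ⊤ := Submodule.orthogonal_eq_bot_iff.mp h
      apply hKinf
      have : FiniteDimensional ℝ (⊤ : Submodule ℝ K) := hS_top ▸ inferInstance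
      exact Module.Finite.equiv (Submodule.topEquiv)
    obtain ⟨u', hu'S, hu'ne⟩ := Submodule.exists_mem_ne_zero_of_ne_bot hSne
    refine ⟨(u' : H), u'.2, ?_, fun h => hu'ne (Subtype.coe_injective h)⟩
    have := (Submodule.mem_orthogonal S u').mp hu'S _
      (Submodule.mem_span_singleton_self (⟨p, hpK⟩ : K))
    have h2 : ⟪(⟨p, hpK⟩ : K), u'⟫ = 0 := this
    rw [Submodule.coe_inner] at h2
    simpa [real_inner_comm] using h2
  have hrpos : (0:ℝ) < ‖p‖ := norm_pos_iff.mpr hpne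
  have hpu : ⟪p, u⟫ = 0 := by rw [real_inner_comm]; exact hup
  have hpv : ⟪p, v⟫ = ‖p‖ ^ 2 := by
    have h0 : ⟪p, v - p⟫ = 0 := hinner_vp p hpK
    rw [inner_sub_right] at h0
    have h1 := real_inner_self_eq_norm_sq p
    linarith
  have huv : ⟪u, v⟫ = 0 := by
    have h0 : ⟪u, v - p⟫ = 0 := hinner_vp u huK
    rw [inner_sub_right] at h0
    linarith
  have hune' : (0:ℝ) < ‖u‖ := norm_pos_iff.mpr hune
  refine ⟨2 * ‖p‖, by positivity, fun v' hv' hlt => ?_⟩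
  have htnn : 0 ≤ ‖v' - v‖ := norm_nonneg _
  obtain ⟨w, hwK, hwv, hwn⟩ :
      ∃ w : H, w ∈ K ∧ ⟪w, v⟫ = -(‖v' - v‖ ^ 2) / 2 ∧ ‖w‖ = ‖v' - v‖ := by
    set t : ℝ := ‖v' - v‖
    set a : ℝ := -(t ^ 2) / (2 * ‖p‖) with ha
    have hta : a ^ 2 ≤ t ^ 2 := by
      rw [ha, div_pow, div_le_iff₀ (by positivity)]
      nlinarith [sq_nonneg t, sq_nonneg (t * (2 * ‖p‖ - t))]
    set b : ℝ := Real.sqrt (t ^ 2 - a ^ 2) with hb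
    have hb2 : b ^ 2 = t ^ 2 - a ^ 2 := Real.sq_sqrt (by linarith)
    refine ⟨(a * ‖p‖⁻¹) • p + (b * ‖u‖⁻¹) • u, ?_, ?_, ?_⟩
    · exact K.add_mem (K.smul_mem _ hpK) (K.smul_mem _ huK)
    · rw [inner_add_left, real_inner_smul_left, real_inner_smul_left, hpv, huv, ha]
      field_simp
      ring
    · have hsq : ‖(a * ‖p‖⁻¹) • p + (b * ‖u‖⁻¹) • u‖ ^ 2 = t ^ 2 := by
        rw [← real_inner_self_eq_norm_sq, inner_add_add_self]
        simp only [real_inner_smul_left, real_inner_smul_right, hpu, hup]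
        simp only [real_inner_self_eq_norm_sq]
        field_simp
        rw [hb2]; ring
      nlinarith [norm_nonneg ((a * ‖p‖⁻¹) • p + (b * ‖u‖⁻¹) • u), htnn, hsq]
  refine ⟨v + w, ?_, by simpa using hwK, by simpa using hwn⟩
  have hvw : ⟪v, w⟫ = -(‖v' - v‖ ^ 2) / 2 := by rw [real_inner_comm]; exact hwv
  have hsq : ‖v + w‖ ^ 2 = 1 := by
    rw [norm_add_sq_real, hv, hvw, ← hwn]
    ring
  nlinarith [norm_nonneg (v + w)]
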